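/- Let 𝒞 be a quasi-similar Cantor set and f_s its associated non-decreasing singular function. If x < y in [0,1) satisfy y − x ≤ 1/(k_1⋯k_n), then f_s(y) − f_s(x) ≤ 1/(m_1⋯m_n). -/

import Mathlib

open scoped Classical
open MeasureTheory

/-- The data of a quasi-similar Cantor set construction with parameters `(kᵢ)`, `(mᵢ)`
(indexed from `1`), `2 ≤ mᵢ ≤ ⌊kᵢ/2⌋`.  `ends n` is the (finite) set of left endpoints of
the `m₁⋯mₙ` closed intervals, each of length `1/(k₁⋯kₙ)`, forming the `n`-th stage `Aₙ`
(`ends 0 = {0}`, the interval `[0,1]`).  At each stage every interval is divided into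
`k_{n+1}` equal parts of which `m_{n+1}` are selected according to a fixed pattern
`off (n+1)` of offsets (the same configuration in each interval), including the first and
the last subinterval, with pairwise disjoint closures. -/
structure QSCantor where
  k : ℕ → ℕ
  m : ℕ → ℕ
  ends : ℕ → Finset ℝ
  off : ℕ → Finset ℝ
  two_le_m : ∀ i, 2 ≤ m i
  m_le_half_k : ∀ i, m i ≤ k i / 2
  ends_zero : ends 0 = {0}
  card_off : ∀ n, (off (n + 1)).card = m (n + 1)
  off_zero : ∀ n, (0 : ℝ) ∈ off (n + 1)
  off_last : ∀ n,
    (∏ i ∈ Finset.range n, (k (i + 1) : ℝ))⁻¹ -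
      (∏ i ∈ Finset.range (n + 1), (k (i + 1) : ℝ))⁻¹ ∈ off (n + 1)
  off_mult : ∀ n, ∀ o ∈ off (n + 1), ∃ r : ℕ,
    (r : ℝ) * (∏ i ∈ Finset.range (n + 1), (k (i + 1) : ℝ))⁻¹ = o ∧ r + 1 ≤ k (n + 1)
  off_sep : ∀ n, ∀ o ∈ off (n + 1), ∀ o' ∈ off (n + 1), o ≠ o' →
    2 * (∏ i ∈ Finset.range (n + 1), (k (i + 1) : ℝ))⁻¹ ≤ |o - o'|
  ends_succ : ∀ n, (ends (n + 1) : Set ℝ) =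
    {z : ℝ | ∃ b ∈ ends n, ∃ o ∈ off (n + 1), z = b + o}

namespace QSCantor

/-- Length `1/(k₁⋯kₙ)` of the stage-`n` intervals. -/
noncomputable def len (C : QSCantor) (n : ℕ) : ℝ :=
  (∏ i ∈ Finset.range n, (C.k (i + 1) : ℝ))⁻¹

/-- The product `m₁⋯mₙ`. -/
def prodM (C : QSCantor) (n : ℕ) : ℕ := ∏ i ∈ Finset.range n, C.m (i + 1)

/-- The `n`-th stage `Aₙ` of the construction: a union of `m₁⋯mₙ` closed intervals. -/
noncomputable def stage (C : QSCantor) (n : ℕ) : Set ℝ :=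
  ⋃ a ∈ C.ends n, Set.Icc a (a + C.len n)

/-- The quasi-similar Cantor set `𝒞 = ⋂ₙ Aₙ`. -/
noncomputable def cantorSet (C : QSCantor) : Set ℝ := ⋂ n, C.stage n

/-- The approximating absolutely continuous function `fₙ`: `fₙ(0) = 0`, `fₙ' = 0` off
`Aₙ` and `fₙ' = (k₁⋯kₙ)/(m₁⋯mₙ)` on `Aₙ`; equivalently
`fₙ(x) = (k₁⋯kₙ)/(m₁⋯mₙ) · λ(Aₙ ∩ [0,x])`. -/
noncomputable def fseq (C : QSCantor) (n : ℕ) (x : ℝ) : ℝ :=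
  ((∏ i ∈ Finset.range n, (C.k (i + 1) : ℝ)) / (C.prodM n : ℝ)) *
    (volume (C.stage n ∩ Set.Icc 0 x)).toReal

/-- The associated singular function `f_s = lim fₙ`. -/
noncomputable def fs (C : QSCantor) (x : ℝ) : ℝ :=
  Filter.limUnder Filter.atTop (fun n => C.fseq n x)

end QSCantor

section AuxSum

/-- Sum with at most one nonzero term, each term bounded. -/
lemma sum_le_of_unique_nonzero {α : Type*} (s : Finset α) (f : α → ℝ) (B : ℝ)
    (hB : 0 ≤ B) (h0 : ∀ a ∈ s, 0 ≤ f a)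
    (hone : ∀ a ∈ s, ∀ b ∈ s, f a ≠ 0 → f b ≠ 0 → a = b)
    (hbd : ∀ a ∈ s, f a ≤ B) : ∑ a ∈ s, f a ≤ B := by
  by_cases hall : ∀ a ∈ s, f a = 0
  · rw [Finset.sum_eq_zero hall]; exact hB
  · push_neg at hall
    obtain ⟨a₀, ha₀, hne⟩ := hall
    rw [Finset.sum_eq_single_of_mem a₀ ha₀ (fun b hb hba => by
      by_contra hb0; exact hba (hone b hb a₀ ha₀ hb0 hne))]
    exact hbd a₀ ha₀

lemma abs_sum_sub_sum_le {α : Type*} (s : Finset α) (u v : α → ℝ) (B : ℝ) (hB : 0 ≤ B)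
    (h1 : ∀ a ∈ s, u a = v a ∨ (0 ≤ u a ∧ u a ≤ B ∧ 0 ≤ v a ∧ v a ≤ B))
    (hone : ∀ a ∈ s, ∀ b ∈ s, u a ≠ v a → u b ≠ v b → a = b) :
    |(∑ a ∈ s, u a) - ∑ a ∈ s, v a| ≤ B := by
  rw [← Finset.sum_sub_distrib]
  by_cases hall : ∀ a ∈ s, u a - v a = 0
  · rw [Finset.sum_eq_zero hall]; simpa using hB
  · push_neg at hall
    obtain ⟨a₀, ha₀, hne⟩ := hall
    rw [Finset.sum_eq_single_of_mem a₀ ha₀ (fun b hb hba => by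
      by_contra hb0
      exact hba (hone b hb a₀ ha₀ (fun h => hb0 (by rw [h, sub_self]))
        (fun h => hne (by rw [h, sub_self]))))]
    rcases h1 a₀ ha₀ with h | ⟨h1, h2, h3, h4⟩
    · exact absurd (by rw [h, sub_self]) hne
    · rw [abs_sub_le_iff]; constructor <;> linarith

end AuxSum

namespace QSCantor

open Set

variable (C : QSCantor)

lemma four_le_k (i : ℕ) : 4 ≤ C.k i := by
  have h1 := C.two_le_m i
  have h2 := C.m_le_half_k i
  omega

lemma k_cast_pos (i : ℕ) : (0 : ℝ) < (C.k i : ℝ) := by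
  have := C.four_le_k i
  exact_mod_cast Nat.lt_of_lt_of_le (by norm_num) this

lemma len_pos (n : ℕ) : 0 < C.len n := by
  rw [QSCantor.len]
  exact inv_pos.2 (Finset.prod_pos fun i _ => C.k_cast_pos (i + 1))

lemma len_zero : C.len 0 = 1 := by simp [QSCantor.len]

lemma len_succ (n : ℕ) : C.len (n + 1) = C.len n * ((C.k (n + 1) : ℝ))⁻¹ := by
  rw [QSCantor.len, QSCantor.len, Finset.prod_range_succ, mul_inv]

lemma k_mul_len_succ (n : ℕ) : (C.k (n + 1) : ℝ) * C.len (n + 1) = C.len n := by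
  rw [C.len_succ n]
  rw [mul_comm, mul_assoc, inv_mul_cancel₀ (C.k_cast_pos (n+1)).ne', mul_one]

lemma len_succ_le (n : ℕ) : C.len (n + 1) ≤ C.len n := by
  rw [C.len_succ n]
  nth_rewrite 2 [← mul_one (C.len n)]
  apply mul_le_mul_of_nonneg_left _ (C.len_pos n).le
  rw [inv_le_one_iff₀]
  right
  have := C.four_le_k (n+1)
  exact_mod_cast by omega

lemma len_anti {n N : ℕ} (h : n ≤ N) : C.len N ≤ C.len n := by
  induction N, h using Nat.le_induction with
  | base => exact le_refl _
  | succ N hN ih => exact (C.len_succ_le N).trans ih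

lemma prodM_pos (n : ℕ) : 0 < C.prodM n :=
  Finset.prod_pos fun i _ => Nat.lt_of_lt_of_le (by norm_num) (C.two_le_m (i + 1))

lemma prodM_succ (n : ℕ) : C.prodM (n + 1) = C.prodM n * C.m (n + 1) := by
  rw [QSCantor.prodM, QSCantor.prodM, Finset.prod_range_succ]

lemma two_pow_le_prodM (n : ℕ) : 2 ^ n ≤ C.prodM n := by
  rw [QSCantor.prodM]
  calc 2 ^ n = ∏ _i ∈ Finset.range n, 2 := by rw [Finset.prod_const, Finset.card_range]
  _ ≤ ∏ i ∈ Finset.range n, C.m (i + 1) := Finset.prod_le_prod' fun i _ => C.two_le_m (i + 1)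

lemma off_nonneg {n : ℕ} {o : ℝ} (ho : o ∈ C.off (n + 1)) : 0 ≤ o := by
  obtain ⟨r, hr, _⟩ := C.off_mult n o ho
  rw [← hr]
  have : ((∏ i ∈ Finset.range (n + 1), (C.k (i + 1) : ℝ))⁻¹) = C.len (n + 1) := rfl
  rw [this]
  exact mul_nonneg (Nat.cast_nonneg r) (C.len_pos _).le

lemma off_add_len_le {n : ℕ} {o : ℝ} (ho : o ∈ C.off (n + 1)) :
    o + C.len (n + 1) ≤ C.len n := by
  obtain ⟨r, hr, hrk⟩ := C.off_mult n o ho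
  have hlen : ((∏ i ∈ Finset.range (n + 1), (C.k (i + 1) : ℝ))⁻¹) = C.len (n + 1) := rfl
  rw [hlen] at hr
  have : o + C.len (n + 1) = ((r : ℝ) + 1) * C.len (n + 1) := by rw [← hr]; ring
  rw [this, ← C.k_mul_len_succ n]
  apply mul_le_mul_of_nonneg_right _ (C.len_pos (n + 1)).le
  exact_mod_cast hrk

lemma off_sep' {n : ℕ} {o o' : ℝ} (ho : o ∈ C.off (n + 1)) (ho' : o' ∈ C.off (n + 1))
    (hne : o ≠ o') : 2 * C.len (n + 1) ≤ |o - o'| := C.off_sep n o ho o' ho' hne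

lemma mem_ends_succ {n : ℕ} {z : ℝ} :
    z ∈ C.ends (n + 1) ↔ ∃ b ∈ C.ends n, ∃ o ∈ C.off (n + 1), z = b + o := by
  rw [← Finset.mem_coe, C.ends_succ n]; rfl

/-- Bounds and separation of endpoints. -/
lemma ends_props (n : ℕ) :
    (∀ a ∈ C.ends n, 0 ≤ a ∧ a + C.len n ≤ 1) ∧
    (∀ a ∈ C.ends n, ∀ b ∈ C.ends n, a ≠ b → 2 * C.len n ≤ |a - b|) := by
  induction n with
  | zero =>
    rw [C.ends_zero]
    refine ⟨fun a ha => ?_, fun a ha b hb hne => ?_⟩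
    · rw [Finset.mem_singleton] at ha
      subst ha
      simp [C.len_zero]
    · rw [Finset.mem_singleton] at ha hb
      exact absurd (ha.trans hb.symm) hne
  | succ n ih =>
    obtain ⟨ihb, ihs⟩ := ih
    constructor
    · intro a ha
      rw [C.mem_ends_succ] at ha
      obtain ⟨b, hb, o, ho, rfl⟩ := ha
      obtain ⟨hb0, hb1⟩ := ihb b hb
      have h1 := C.off_nonneg ho
      have h2 := C.off_add_len_le ho
      constructor <;> linarith
    · intro a ha a' ha' hne
      rw [C.mem_ends_succ] at ha ha'
      obtain ⟨b, hb, o, ho, rfl⟩ := ha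
      obtain ⟨b', hb', o', ho', rfl⟩ := ha'
      by_cases hbb : b = b'
      · subst hbb
        have hoo : o ≠ o' := fun h => hne (by rw [h])
        have := C.off_sep' ho ho' hoo
        calc 2 * C.len (n + 1) ≤ |o - o'| := this
        _ = |(b + o) - (b + o')| := by ring_nf
      · have hsep := ihs b hb b' hb' hbb
        have h1 := C.off_nonneg ho
        have h2 := C.off_add_len_le ho
        have h1' := C.off_nonneg ho'
        have h2' := C.off_add_len_le ho'
        have hll := C.len_pos (n + 1)
        have hl := C.len_pos n
        have hmono := C.len_succ_le n
        rcases abs_cases (b - b') with ⟨heq, _⟩ | ⟨heq, _⟩ <;> rw [heq] at hsep <;>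
          rw [le_abs] <;>
          first
            | (left; linarith) | (right; linarith)
          
lemma ends_nonneg {n : ℕ} {a : ℝ} (ha : a ∈ C.ends n) : 0 ≤ a :=
  ((C.ends_props n).1 a ha).1

lemma ends_le_one {n : ℕ} {a : ℝ} (ha : a ∈ C.ends n) : a + C.len n ≤ 1 :=
  ((C.ends_props n).1 a ha).2

lemma ends_sep {n : ℕ} {a b : ℝ} (ha : a ∈ C.ends n) (hb : b ∈ C.ends n) (hne : a ≠ b) :
    2 * C.len n ≤ |a - b| := (C.ends_props n).2 a ha b hb hne

lemma ends_disjoint {n : ℕ} {a b : ℝ} (ha : a ∈ C.ends n) (hb : b ∈ C.ends n) (hne : a ≠ b) :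
    Disjoint (Icc a (a + C.len n)) (Icc b (b + C.len n)) := by
  have hsep := C.ends_sep ha hb hne
  have hl := C.len_pos n
  rw [Set.disjoint_left]
  rintro z ⟨hz1, hz2⟩ ⟨hz3, hz4⟩
  rcases abs_cases (a - b) with ⟨heq, _⟩ | ⟨heq, _⟩ <;> rw [heq] at hsep <;> linarith

lemma Icc_subset_stage {n : ℕ} {a : ℝ} (ha : a ∈ C.ends n) :
    Icc a (a + C.len n) ⊆ C.stage n :=
  Set.subset_biUnion_of_mem (u := fun a => Icc a (a + C.len n)) ha

lemma stage_subset_unit (n : ℕ) : C.stage n ⊆ Icc 0 1 := by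
  rw [QSCantor.stage]
  refine Set.iUnion₂_subset fun a ha => ?_
  have h1 := C.ends_nonneg ha
  have h2 := C.ends_le_one ha
  exact Icc_subset_Icc h1 (by linarith)

lemma measurableSet_stage (n : ℕ) : MeasurableSet (C.stage n) :=
  MeasurableSet.biUnion (C.ends n).countable_toSet fun _ _ => measurableSet_Icc

lemma stage_succ_subset (n : ℕ) : C.stage (n + 1) ⊆ C.stage n := by
  rw [QSCantor.stage]
  refine Set.iUnion₂_subset fun a ha => ?_
  rw [C.mem_ends_succ] at ha
  obtain ⟨b, hb, o, ho, rfl⟩ := ha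
  refine subset_trans ?_ (C.Icc_subset_stage hb)
  have h1 := C.off_nonneg ho
  have h2 := C.off_add_len_le ho
  exact Icc_subset_Icc (by linarith) (by linarith)

lemma stage_mono {n N : ℕ} (h : n ≤ N) : C.stage N ⊆ C.stage n := by
  induction N, h using Nat.le_induction with
  | base => exact subset_refl _
  | succ N hN ih => exact (C.stage_succ_subset N).trans ih

lemma vol_inter_Icc_ne_top (T : Set ℝ) (a l : ℝ) : volume (T ∩ Icc a (a + l)) ≠ ⊤ := by
  refine ((measure_mono Set.inter_subset_right).trans_lt ?_).ne
  rw [Real.volume_Icc]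
  exact ENNReal.ofReal_lt_top

lemma vol_ne_top_of_subset_stage {N : ℕ} {T : Set ℝ} (h : T ⊆ C.stage N) :
    volume T ≠ ⊤ := by
  refine ((measure_mono (h.trans (C.stage_subset_unit N))).trans_lt ?_).ne
  rw [Real.volume_Icc]
  exact ENNReal.ofReal_lt_top

/-- Decomposition of the measure of a subset of `stage N` over the intervals. -/
lemma vol_decomp {N : ℕ} {T : Set ℝ} (hT : MeasurableSet T) (hsub : T ⊆ C.stage N) :
    (volume T).toReal = ∑ a ∈ C.ends N, (volume (T ∩ Icc a (a + C.len N))).toReal := by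
  have hU : T = ⋃ a ∈ C.ends N, (T ∩ Icc a (a + C.len N)) := by
    ext z
    simp only [Set.mem_iUnion, Set.mem_inter_iff, exists_prop]
    constructor
    · intro hz
      obtain ⟨s, ⟨a, rfl⟩, hzs⟩ := hsub hz
      simp only [Set.mem_iUnion, exists_prop] at hzs
      obtain ⟨ha, hz2⟩ := hzs
      exact ⟨a, ha, hz, hz2⟩
    · rintro ⟨a, _, hz, _⟩; exact hz
  have hd : (↑(C.ends N) : Set ℝ).PairwiseDisjoint
      (fun a => T ∩ Icc a (a + C.len N)) := by
    intro a ha b hb hne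
    exact (C.ends_disjoint (by exact_mod_cast ha) (by exact_mod_cast hb) hne).mono
      Set.inter_subset_right Set.inter_subset_right
  rw [show volume T = volume (⋃ a ∈ C.ends N, (T ∩ Icc a (a + C.len N))) from by rw [← hU]]
  rw [measure_biUnion_finset hd fun a _ => hT.inter measurableSet_Icc]
  exact ENNReal.toReal_sum fun a _ => vol_inter_Icc_ne_top T a (C.len N)


lemma Icc_disj {a b l : ℝ} (hl : 0 < l) (h : 2 * l ≤ |a - b|) :
    Disjoint (Icc a (a + l)) (Icc b (b + l)) := by
  rw [Set.disjoint_left]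
  rintro z ⟨hz1, hz2⟩ ⟨hz3, hz4⟩
  rcases abs_cases (a - b) with ⟨heq, _⟩ | ⟨heq, _⟩ <;> rw [heq] at h <;> linarith

/-- Structure of `stage (N+1)` within a single stage-`N` interval. -/
lemma stage_succ_inter {N : ℕ} {a : ℝ} (ha : a ∈ C.ends N) :
    C.stage (N + 1) ∩ Icc a (a + C.len N) =
      ⋃ o ∈ C.off (N + 1), Icc (a + o) (a + o + C.len (N + 1)) := by
  ext z
  simp only [Set.mem_inter_iff, Set.mem_iUnion, exists_prop]
  constructor
  · rintro ⟨hz1, hz2⟩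
    obtain ⟨s, ⟨a', rfl⟩, hzs⟩ := hz1
    simp only [Set.mem_iUnion, exists_prop] at hzs
    obtain ⟨ha', hz3⟩ := hzs
    rw [C.mem_ends_succ] at ha'
    obtain ⟨b, hb, o, ho, rfl⟩ := ha'
    have h1 := C.off_nonneg ho
    have h2 := C.off_add_len_le ho
    have hzb : z ∈ Icc b (b + C.len N) := by
      obtain ⟨hz4, hz5⟩ := hz3
      exact ⟨by linarith, by linarith⟩
    have hba : b = a := by
      by_contra hba
      exact Set.disjoint_left.1 (C.ends_disjoint hb ha hba) hzb hz2
    subst hba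
    exact ⟨o, ho, hz3⟩
  · rintro ⟨o, ho, hz⟩
    have h1 := C.off_nonneg ho
    have h2 := C.off_add_len_le ho
    have hmem : a + o ∈ C.ends (N + 1) := C.mem_ends_succ.2 ⟨a, ha, o, ho, rfl⟩
    refine ⟨C.Icc_subset_stage hmem hz, ?_⟩
    obtain ⟨hz1, hz2⟩ := hz
    exact ⟨by linarith, by linarith⟩

lemma child_vol {N : ℕ} {a : ℝ} (ha : a ∈ C.ends N) :
    (volume (C.stage (N + 1) ∩ Icc a (a + C.len N))).toReal =
      (C.m (N + 1) : ℝ) * C.len (N + 1) := by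
  rw [C.stage_succ_inter ha]
  have hd : (↑(C.off (N + 1)) : Set ℝ).PairwiseDisjoint
      (fun o => Icc (a + o) (a + o + C.len (N + 1))) := by
    intro o ho o' ho' hne
    refine Icc_disj (C.len_pos (N + 1)) ?_
    have := C.off_sep' (Finset.mem_coe.1 ho) (Finset.mem_coe.1 ho') hne
    calc 2 * C.len (N + 1) ≤ |o - o'| := this
    _ = |(a + o) - (a + o')| := by ring_nf
  rw [measure_biUnion_finset hd fun o _ => measurableSet_Icc,
    ENNReal.toReal_sum fun o _ => by
      rw [Real.volume_Icc]; exact ENNReal.ofReal_ne_top]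
  have : ∀ o ∈ C.off (N + 1),
      (volume (Icc (a + o) (a + o + C.len (N + 1)))).toReal = C.len (N + 1) := by
    intro o _
    rw [Real.volume_Icc, ENNReal.toReal_ofReal (by linarith [C.len_pos (N + 1)])]
    ring_nf
  rw [Finset.sum_congr rfl this, Finset.sum_const, C.card_off N, nsmul_eq_mul]

/-- Every stage-`N` endpoint lies inside a stage-`n` interval, `n ≤ N`. -/
lemma nest {n N : ℕ} (h : n ≤ N) :
    ∀ a' ∈ C.ends N, ∃ a ∈ C.ends n, a ≤ a' ∧ a' + C.len N ≤ a + C.len n := by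
  induction N, h using Nat.le_induction with
  | base => exact fun a' ha' => ⟨a', ha', le_refl _, le_refl _⟩
  | succ N hN ih =>
    intro a' ha'
    rw [C.mem_ends_succ] at ha'
    obtain ⟨b, hb, o, ho, rfl⟩ := ha'
    obtain ⟨a, ha, h1, h2⟩ := ih b hb
    have h3 := C.off_nonneg ho
    have h4 := C.off_add_len_le ho
    exact ⟨a, ha, by linarith, by linarith⟩

/-- The measure of `stage N` within a single stage-`n` interval, `n ≤ N`. -/
lemma stage_inter_vol {n N : ℕ} (h : n ≤ N) {a : ℝ} (ha : a ∈ C.ends n) :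
    (volume (C.stage N ∩ Icc a (a + C.len n))).toReal =
      ((C.prodM N : ℝ) / (C.prodM n : ℝ)) * C.len N := by
  induction N, h using Nat.le_induction with
  | base =>
    rw [Set.inter_eq_self_of_subset_right (C.Icc_subset_stage ha), Real.volume_Icc,
      ENNReal.toReal_ofReal (by linarith [C.len_pos n]), div_self (by
        exact_mod_cast (C.prodM_pos n).ne'), one_mul]
    ring_nf
  | succ N hN ih =>
    have hsub : C.stage (N + 1) ∩ Icc a (a + C.len n) ⊆ C.stage N :=
      Set.inter_subset_left.trans (C.stage_succ_subset N)
    have hsub0 : C.stage N ∩ Icc a (a + C.len n) ⊆ C.stage N := Set.inter_subset_left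
    have hmeas : MeasurableSet (C.stage (N + 1) ∩ Icc a (a + C.len n)) :=
      (C.measurableSet_stage (N + 1)).inter measurableSet_Icc
    have hmeas0 : MeasurableSet (C.stage N ∩ Icc a (a + C.len n)) :=
      (C.measurableSet_stage N).inter measurableSet_Icc
    rw [C.vol_decomp hmeas hsub]
    have key : ∀ a' ∈ C.ends N,
        (volume (C.stage (N + 1) ∩ Icc a (a + C.len n) ∩ Icc a' (a' + C.len N))).toReal =
        ((C.m (N + 1) : ℝ) * C.len (N + 1) / C.len N) *
          (volume (C.stage N ∩ Icc a (a + C.len n) ∩ Icc a' (a' + C.len N))).toReal := by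
      intro a' ha'
      obtain ⟨b, hb, hb1, hb2⟩ := C.nest hN a' ha'
      have hIsub : Icc a' (a' + C.len N) ⊆ Icc b (b + C.len n) := Icc_subset_Icc hb1 hb2
      by_cases hba : b = a
      · subst hba
        have hIa : Icc a' (a' + C.len N) ⊆ Icc b (b + C.len n) := hIsub
        have e1 : C.stage (N + 1) ∩ Icc b (b + C.len n) ∩ Icc a' (a' + C.len N) =
            C.stage (N + 1) ∩ Icc a' (a' + C.len N) := by
          rw [Set.inter_assoc, Set.inter_eq_self_of_subset_right hIa]
        have e2 : C.stage N ∩ Icc b (b + C.len n) ∩ Icc a' (a' + C.len N) =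
            Icc a' (a' + C.len N) := by
          rw [Set.inter_assoc, Set.inter_eq_self_of_subset_right hIa,
            Set.inter_eq_self_of_subset_right (C.Icc_subset_stage ha')]
        rw [e1, e2, C.child_vol ha', Real.volume_Icc,
          ENNReal.toReal_ofReal (by linarith [C.len_pos N])]
        have hlN : C.len N ≠ 0 := (C.len_pos N).ne'
        field_simp
        ring
      · have hdisj := C.ends_disjoint hb ha hba
        have e1 : Icc a (a + C.len n) ∩ Icc a' (a' + C.len N) = ∅ := by
          rw [Set.eq_empty_iff_forall_notMem]
          intro z ⟨hz1, hz2⟩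
          exact Set.disjoint_left.1 hdisj (hIsub hz2) hz1
        rw [Set.inter_assoc, Set.inter_assoc, e1, Set.inter_empty, Set.inter_empty]
        simp
    rw [Finset.sum_congr rfl key, ← Finset.mul_sum, ← C.vol_decomp hmeas0 hsub0, ih]
    have hlN : (C.len N) ≠ 0 := (C.len_pos N).ne'
    have hMn : (C.prodM n : ℝ) ≠ 0 := by exact_mod_cast (C.prodM_pos n).ne'
    rw [C.prodM_succ N]
    push_cast
    field_simp


lemma prod_k_eq (N : ℕ) : (∏ i ∈ Finset.range N, (C.k (i + 1) : ℝ)) = (C.len N)⁻¹ := by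
  rw [QSCantor.len, inv_inv]

lemma fseq_eq (N : ℕ) (t : ℝ) :
    C.fseq N t = (C.len N)⁻¹ / (C.prodM N : ℝ) * (volume (C.stage N ∩ Icc 0 t)).toReal := by
  rw [QSCantor.fseq, C.prod_k_eq]

lemma coef_mul_len (N : ℕ) : (C.len N)⁻¹ / (C.prodM N : ℝ) * C.len N = ((C.prodM N : ℝ))⁻¹ := by
  have h1 : (C.len N) ≠ 0 := (C.len_pos N).ne'
  have h2 : (C.prodM N : ℝ) ≠ 0 := by exact_mod_cast (C.prodM_pos N).ne'
  field_simp

lemma coef_mul_child (N : ℕ) :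
    (C.len (N + 1))⁻¹ / (C.prodM (N + 1) : ℝ) * ((C.m (N + 1) : ℝ) * C.len (N + 1)) =
      ((C.prodM N : ℝ))⁻¹ := by
  have h1 : (C.len (N + 1)) ≠ 0 := (C.len_pos (N + 1)).ne'
  have h2 : (C.prodM N : ℝ) ≠ 0 := by exact_mod_cast (C.prodM_pos N).ne'
  have h3 : (C.m (N + 1) : ℝ) ≠ 0 := by
    have := C.two_le_m (N + 1); exact_mod_cast by omega
  rw [C.prodM_succ N]
  push_cast
  field_simp

lemma coef_nonneg (N : ℕ) : 0 ≤ (C.len N)⁻¹ / (C.prodM N : ℝ) := by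
  have h1 := C.len_pos N
  have h2 := C.prodM_pos N
  positivity

/-- The per-`N` key estimate. -/
lemma fseq_diff_le (x y : ℝ) (hx : 0 ≤ x) (hxy : x ≤ y) {n N : ℕ} (hnN : n ≤ N)
    (h : y - x ≤ C.len n) :
    C.fseq N y - C.fseq N x ≤ ((C.prodM n : ℝ))⁻¹ := by
  set T : Set ℝ := C.stage N ∩ Ioc x y with hT
  have hTmeas : MeasurableSet T := (C.measurableSet_stage N).inter measurableSet_Ioc
  have hsplit : C.fseq N y - C.fseq N x =
      (C.len N)⁻¹ / (C.prodM N : ℝ) * (volume T).toReal := by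
    rw [C.fseq_eq N y, C.fseq_eq N x]
    have hset : C.stage N ∩ Icc 0 y = (C.stage N ∩ Icc 0 x) ∪ T := by
      rw [hT, ← Set.inter_union_distrib_left, Set.Icc_union_Ioc_eq_Icc hx hxy]
    have hdisj : Disjoint (C.stage N ∩ Icc 0 x) T := by
      rw [Set.disjoint_left]
      rintro z ⟨_, _, hz2⟩ ⟨_, hz3, _⟩
      exact absurd hz2 (not_le.2 hz3)
    have hvol : volume (C.stage N ∩ Icc 0 y) =
        volume (C.stage N ∩ Icc 0 x) + volume T := by
      rw [hset, measure_union hdisj hTmeas]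
    rw [hvol, ENNReal.toReal_add
      (C.vol_ne_top_of_subset_stage (N := N) Set.inter_subset_left)
      (C.vol_ne_top_of_subset_stage (N := N) Set.inter_subset_left)]
    ring
  rw [hsplit]
  have hTsub : T ⊆ C.stage n := Set.inter_subset_left.trans (C.stage_mono hnN)
  rw [C.vol_decomp (N := n) hTmeas hTsub]
  have hBnn : (0 : ℝ) ≤ ((C.prodM N : ℝ) / (C.prodM n : ℝ)) * C.len N := by
    have h1 := C.len_pos N
    have h2 := C.prodM_pos N
    have h3 := C.prodM_pos n
    positivity
  have hinfo : ∀ a ∈ C.ends n,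
      (volume (T ∩ Icc a (a + C.len n))).toReal ≠ 0 → x < a + C.len n ∧ a < y := by
    intro a _ hf
    constructor
    · by_contra hc
      push_neg at hc
      apply hf
      have : T ∩ Icc a (a + C.len n) = ∅ := by
        rw [Set.eq_empty_iff_forall_notMem]
        rintro z ⟨⟨_, hz1, _⟩, _, hz2⟩
        linarith
      rw [this]
      simp
    · by_contra hc
      push_neg at hc
      apply hf
      have hsub : T ∩ Icc a (a + C.len n) ⊆ {a} := by
        rintro z ⟨⟨_, _, hz1⟩, hz2, _⟩
        have : z = a := le_antisymm (hz1.trans hc) hz2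
        simp [this]
      have := measure_mono_null hsub Real.volume_singleton
      rw [this]
      simp
  have hsum := sum_le_of_unique_nonzero (C.ends n)
    (fun a => (volume (T ∩ Icc a (a + C.len n))).toReal)
    (((C.prodM N : ℝ) / (C.prodM n : ℝ)) * C.len N) hBnn
    (fun a _ => ENNReal.toReal_nonneg)
    (fun a ha b hb hfa hfb => by
      by_contra hne
      have hsep := C.ends_sep ha hb hne
      obtain ⟨ha1, ha2⟩ := hinfo a ha hfa
      obtain ⟨hb1, hb2⟩ := hinfo b hb hfb
      rcases abs_cases (a - b) with ⟨heq, _⟩ | ⟨heq, _⟩ <;> rw [heq] at hsep <;> linarith)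
    (fun a ha => by
      have hmono : volume (T ∩ Icc a (a + C.len n)) ≤
          volume (C.stage N ∩ Icc a (a + C.len n)) :=
        measure_mono (Set.inter_subset_inter_left _ Set.inter_subset_left)
      have := ENNReal.toReal_mono (vol_inter_Icc_ne_top _ _ _) hmono
      rw [C.stage_inter_vol hnN ha] at this
      exact this)
  calc (C.len N)⁻¹ / (C.prodM N : ℝ) *
        (∑ a ∈ C.ends n, (volume (T ∩ Icc a (a + C.len n))).toReal)
      ≤ (C.len N)⁻¹ / (C.prodM N : ℝ) *
        (((C.prodM N : ℝ) / (C.prodM n : ℝ)) * C.len N) :=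
        mul_le_mul_of_nonneg_left hsum (C.coef_nonneg N)
    _ = ((C.prodM n : ℝ))⁻¹ := by
        have h1 : (C.len N) ≠ 0 := (C.len_pos N).ne'
        have h2 : (C.prodM N : ℝ) ≠ 0 := by exact_mod_cast (C.prodM_pos N).ne'
        have h3 : (C.prodM n : ℝ) ≠ 0 := by exact_mod_cast (C.prodM_pos n).ne'
        field_simp

/-- Consecutive approximations differ by at most `1/(m₁⋯m_N)`. -/
lemma fseq_cauchy_step (N : ℕ) (t : ℝ) :
    |C.fseq N t - C.fseq (N + 1) t| ≤ ((C.prodM N : ℝ))⁻¹ := by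
  set u : ℝ → ℝ := fun a => (C.len N)⁻¹ / (C.prodM N : ℝ) *
    (volume (C.stage N ∩ Icc 0 t ∩ Icc a (a + C.len N))).toReal with hu_def
  set v : ℝ → ℝ := fun a => (C.len (N + 1))⁻¹ / (C.prodM (N + 1) : ℝ) *
    (volume (C.stage (N + 1) ∩ Icc 0 t ∩ Icc a (a + C.len N))).toReal with hv_def
  have hBnn : (0 : ℝ) ≤ ((C.prodM N : ℝ))⁻¹ := by
    have := C.prodM_pos N; positivity
  have hu : C.fseq N t = ∑ a ∈ C.ends N, u a := by
    rw [C.fseq_eq, C.vol_decomp (N := N)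
      ((C.measurableSet_stage N).inter measurableSet_Icc) Set.inter_subset_left,
      Finset.mul_sum]
  have hv : C.fseq (N + 1) t = ∑ a ∈ C.ends N, v a := by
    rw [C.fseq_eq, C.vol_decomp (N := N)
      ((C.measurableSet_stage (N + 1)).inter measurableSet_Icc)
      (Set.inter_subset_left.trans (C.stage_succ_subset N)),
      Finset.mul_sum]
  have hubd : ∀ a ∈ C.ends N, 0 ≤ u a ∧ u a ≤ ((C.prodM N : ℝ))⁻¹ := by
    intro a _
    constructor
    · exact mul_nonneg (C.coef_nonneg N) ENNReal.toReal_nonneg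
    · rw [hu_def]
      have hmono : (volume (C.stage N ∩ Icc 0 t ∩ Icc a (a + C.len N))).toReal ≤
          (volume (Icc a (a + C.len N))).toReal := by
        refine ENNReal.toReal_mono ?_ (measure_mono Set.inter_subset_right)
        rw [Real.volume_Icc]; exact ENNReal.ofReal_ne_top
      refine (mul_le_mul_of_nonneg_left hmono (C.coef_nonneg N)).trans ?_
      rw [Real.volume_Icc, ENNReal.toReal_ofReal (by linarith [C.len_pos N]),
        show a + C.len N - a = C.len N by ring, C.coef_mul_len N]
  have hvbd : ∀ a ∈ C.ends N, 0 ≤ v a ∧ v a ≤ ((C.prodM N : ℝ))⁻¹ := by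
    intro a ha
    constructor
    · exact mul_nonneg (C.coef_nonneg (N + 1)) ENNReal.toReal_nonneg
    · rw [hv_def]
      have hmono : (volume (C.stage (N + 1) ∩ Icc 0 t ∩ Icc a (a + C.len N))).toReal ≤
          (volume (C.stage (N + 1) ∩ Icc a (a + C.len N))).toReal := by
        refine ENNReal.toReal_mono (vol_inter_Icc_ne_top _ _ _)
          (measure_mono (Set.inter_subset_inter_left _ Set.inter_subset_left))
      refine (mul_le_mul_of_nonneg_left hmono (C.coef_nonneg (N + 1))).trans ?_
      rw [C.child_vol ha, C.coef_mul_child N]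
  have hcase : ∀ a ∈ C.ends N, (t ≤ a ∨ a + C.len N ≤ t) → u a = v a := by
    intro a ha hc
    rcases hc with hc | hc
    · have h0 : ∀ S : Set ℝ, volume (S ∩ Icc 0 t ∩ Icc a (a + C.len N)) = 0 := by
        intro S
        refine measure_mono_null ?_ (Real.volume_singleton (a := a))
        rintro z ⟨⟨_, _, hz1⟩, hz2, _⟩
        have : z = a := le_antisymm (hz1.trans hc) hz2
        simp [this]
      rw [hu_def, hv_def]
      simp only [h0]
      simp
    · have ha0 := C.ends_nonneg ha
      have hIt : Icc a (a + C.len N) ⊆ Icc 0 t := Icc_subset_Icc ha0 hc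
      have equ : C.stage N ∩ Icc 0 t ∩ Icc a (a + C.len N) = Icc a (a + C.len N) := by
        rw [Set.inter_assoc, Set.inter_eq_self_of_subset_right hIt,
          Set.inter_eq_self_of_subset_right (C.Icc_subset_stage ha)]
      have eqv : C.stage (N + 1) ∩ Icc 0 t ∩ Icc a (a + C.len N) =
          C.stage (N + 1) ∩ Icc a (a + C.len N) := by
        rw [Set.inter_assoc, Set.inter_eq_self_of_subset_right hIt]
      rw [hu_def, hv_def]
      simp only [equ, eqv]
      rw [Real.volume_Icc, ENNReal.toReal_ofReal (by linarith [C.len_pos N]),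
        show a + C.len N - a = C.len N by ring, C.coef_mul_len N,
        C.child_vol ha, C.coef_mul_child N]
  rw [hu, hv]
  refine abs_sum_sub_sum_le (C.ends N) u v _ hBnn
    (fun a ha => Or.inr ⟨(hubd a ha).1, (hubd a ha).2, (hvbd a ha).1, (hvbd a ha).2⟩) ?_
  intro a ha b hb hua hub
  have hacrit : a < t ∧ t < a + C.len N := by
    by_contra hc
    rcases not_and_or.1 hc with hc | hc <;> push_neg at hc
    · exact hua (hcase a ha (Or.inl hc))
    · exact hua (hcase a ha (Or.inr hc))
  have hbcrit : b < t ∧ t < b + C.len N := by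
    by_contra hc
    rcases not_and_or.1 hc with hc | hc <;> push_neg at hc
    · exact hub (hcase b hb (Or.inl hc))
    · exact hub (hcase b hb (Or.inr hc))
  by_contra hne
  have hsep := C.ends_sep ha hb hne
  have hl := C.len_pos N
  obtain ⟨h1, h2⟩ := hacrit
  obtain ⟨h3, h4⟩ := hbcrit
  rcases abs_cases (a - b) with ⟨heq, _⟩ | ⟨heq, _⟩ <;> rw [heq] at hsep <;> linarith

lemma fseq_cauchySeq (t : ℝ) : CauchySeq (fun N => C.fseq N t) := by
  refine cauchySeq_of_le_geometric (1 / 2 : ℝ) 1 (by norm_num) fun N => ?_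
  rw [Real.dist_eq]
  refine (C.fseq_cauchy_step N t).trans ?_
  rw [one_mul, one_div, inv_pow]
  refine inv_anti₀ (by positivity) ?_
  exact_mod_cast C.two_pow_le_prodM N

end QSCantor

theorem stmt15 (C : QSCantor) (x y : ℝ) (hx : 0 ≤ x) (hxy : x < y) (hy : y < 1)
    (n : ℕ) (h : y - x ≤ C.len n) :
    C.fs y - C.fs x ≤ ((C.prodM n : ℝ))⁻¹ := by
  have tx : Filter.Tendsto (fun N => C.fseq N x) Filter.atTop (nhds (C.fs x)) :=
    (C.fseq_cauchySeq x).tendsto_limUnder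
  have ty : Filter.Tendsto (fun N => C.fseq N y) Filter.atTop (nhds (C.fs y)) :=
    (C.fseq_cauchySeq y).tendsto_limUnder
  refine le_of_tendsto (ty.sub tx) ?_
  filter_upwards [Filter.eventually_ge_atTop n] with N hN
  exact C.fseq_diff_le x y hx hxy.le hN h
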